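/- Let f : I → R be a Lipschitz convex function on a nontrivial interval I with endpoints a, b ∈ [−∞, +∞]. Then there exists a finite nonnegative Borel measure ν on I such that for every c in the interior of I and every x ∈ I, f(x) = f(c) + (x − c) f'₊(c) + ∫_{[a,c]∩I} (u − x)₊ ν(du) + ∫_{(c,b]∩I} (x − u)₊ ν(du), where f'₊ denotes the right derivative of f. -/

import Mathlib

open MeasureTheory

open Set Filter

lemma ton1 (ν : Measure ℝ) [IsFiniteMeasure ν] (c x : ℝ) :
    ∫⁻ u in Set.Ioo c x, ν (Set.Ioc c u) = ∫⁻ t in Set.Ioi c, ENNReal.ofReal (x - t) ∂ν := by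
  set μ := volume.restrict (Set.Ioo c x) with hμ
  set s : Set (ℝ × ℝ) := {p | c < p.2 ∧ p.2 ≤ p.1} with hs
  have hsm : MeasurableSet s := by
    apply MeasurableSet.inter
    · exact measurableSet_lt measurable_const measurable_snd
    · exact measurableSet_le measurable_snd measurable_fst
  have h1 : (μ.prod ν) s = ∫⁻ u in Set.Ioo c x, ν (Set.Ioc c u) := by
    rw [Measure.prod_apply hsm]
    refine lintegral_congr fun u => ?_
    have : Prod.mk u ⁻¹' s = Set.Ioc c u := by ext t; simp [hs, Set.mem_Ioc]
    rw [this]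
  have h2 : (μ.prod ν) s = ∫⁻ t in Set.Ioi c, ENNReal.ofReal (x - t) ∂ν := by
    rw [Measure.prod_apply_symm hsm]
    have : ∀ t : ℝ, μ ((fun u => (u, t)) ⁻¹' s) = (Set.Ioi c).indicator (fun t => ENNReal.ofReal (x - t)) t := by
      intro t
      rcases lt_or_ge c t with h | h
      · have : ((fun u => (u, t)) ⁻¹' s) = Set.Ici t := by
          ext u; simp [hs, h]
        rw [this, hμ, Measure.restrict_apply measurableSet_Ici]
        have h4 : Set.Ici t ∩ Set.Ioo c x = Set.Ico t x := by
          ext u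
          simp only [Set.mem_inter_iff, Set.mem_Ioo, Set.mem_Ici, Set.mem_Ico]
          constructor
          · rintro ⟨h3, ⟨_, h2⟩⟩; exact ⟨h3, h2⟩
          · rintro ⟨h1, h2⟩; exact ⟨h1, ⟨h.trans_le h1, h2⟩⟩
        rw [h4, Real.volume_Ico, Set.indicator_of_mem (by exact h)]
      · have : ((fun u => (u, t)) ⁻¹' s) = ∅ := by
          ext u; simp [hs]; intro hc; exact absurd hc (not_lt.2 h)
        rw [this, measure_empty, Set.indicator_of_notMem (by simpa using h)]
    rw [lintegral_congr this, lintegral_indicator measurableSet_Ioi]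
  rw [← h1, h2]

lemma ton2 (ν : Measure ℝ) [IsFiniteMeasure ν] (c x : ℝ) :
    ∫⁻ u in Set.Ioo x c, ν (Set.Ioc u c) = ∫⁻ t in Set.Iic c, ENNReal.ofReal (t - x) ∂ν := by
  set μ := volume.restrict (Set.Ioo x c) with hμ
  set s : Set (ℝ × ℝ) := {p | p.1 < p.2 ∧ p.2 ≤ c} with hs
  have hsm : MeasurableSet s := by
    apply MeasurableSet.inter
    · exact measurableSet_lt measurable_fst measurable_snd
    · exact measurableSet_le measurable_snd measurable_const
  have h1 : (μ.prod ν) s = ∫⁻ u in Set.Ioo x c, ν (Set.Ioc u c) := by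
    rw [Measure.prod_apply hsm]
    refine lintegral_congr fun u => ?_
    have : Prod.mk u ⁻¹' s = Set.Ioc u c := by ext t; simp [hs, Set.mem_Ioc]
    rw [this]
  have h2 : (μ.prod ν) s = ∫⁻ t in Set.Iic c, ENNReal.ofReal (t - x) ∂ν := by
    rw [Measure.prod_apply_symm hsm]
    have : ∀ t : ℝ, μ ((fun u => (u, t)) ⁻¹' s) = (Set.Iic c).indicator (fun t => ENNReal.ofReal (t - x)) t := by
      intro t
      rcases le_or_gt t c with h | h
      · have : ((fun u => (u, t)) ⁻¹' s) = Set.Iio t := by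
          ext u; simp [hs, h]
        rw [this, hμ, Measure.restrict_apply measurableSet_Iio]
        have h4 : Set.Iio t ∩ Set.Ioo x c = Set.Ioo x t := by
          ext u
          simp only [Set.mem_inter_iff, Set.mem_Ioo, Set.mem_Iio]
          constructor
          · rintro ⟨h3, ⟨h1, _⟩⟩; exact ⟨h1, h3⟩
          · rintro ⟨h1, h2⟩; exact ⟨h2, ⟨h1, h2.trans_le h⟩⟩
        rw [h4, Real.volume_Ioo, Set.indicator_of_mem (by exact h)]
      · have : ((fun u => (u, t)) ⁻¹' s) = ∅ := by
          ext u
          constructor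
          · rintro ⟨_, htc⟩; exact absurd htc (not_le.2 h)
          · intro hu; exact absurd hu (Set.notMem_empty u)
        rw [this, measure_empty, Set.indicator_of_notMem (by simpa using h)]
    rw [lintegral_congr this, lintegral_indicator measurableSet_Iic]
  rw [← h1, h2]

/-- Carr–Madan type representation for a Lipschitz convex function on a
nontrivial interval `I` with endpoints `a, b`: there is a finite nonnegative Borel measure
`ν` on `I` such that for every `c` in the interior of `I` and `x ∈ I`,
`f x = f c + (x−c) f'₊(c) + ∫_{[a,c]∩I} (u−x)₊ ν(du) + ∫_{(c,b]∩I} (x−u)₊ ν(du)`,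
where `f'₊` is the right derivative `derivWithin f (Set.Ici c) c`. -/
theorem stmt3 (I : Set ℝ) (hI : I.OrdConnected) (hne : ∃ a ∈ I, ∃ b ∈ I, a < b)
    (f : ℝ → ℝ) (L : ℝ) (hconv : ConvexOn ℝ I f)
    (hlip : ∀ x ∈ I, ∀ y ∈ I, |f x - f y| ≤ L * |x - y|) :
    ∃ ν : Measure ℝ, IsFiniteMeasure ν ∧ ν Iᶜ = 0 ∧
      ∀ c ∈ interior I, ∀ x ∈ I,
        f x = f c + (x - c) * derivWithin f (Set.Ici c) c
          + (∫ u in {u ∈ I | u ≤ c}, max (u - x) 0 ∂ν)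
          + ∫ u in {u ∈ I | c < u}, max (x - u) 0 ∂ν := by
  classical
  obtain ⟨a0, ha0, b0, hb0, hab0⟩ := hne
  have hL : 0 ≤ L := by
    have h1 := hlip a0 ha0 b0 hb0
    have h2 : 0 < |a0 - b0| := by rw [abs_pos]; exact sub_ne_zero.2 hab0.ne
    nlinarith [abs_nonneg (f a0 - f b0)]
  -- slope bounds
  have hslope_abs : ∀ p ∈ I, ∀ q ∈ I, p < q → |slope f p q| ≤ L := by
    intro p hp q hq hpq
    have h1 := hlip q hq p hp
    rw [slope_def_field, div_eq_mul_inv, abs_mul, abs_inv]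
    rw [abs_of_pos (sub_pos.2 hpq)]
    rw [abs_of_pos (sub_pos.2 hpq)] at h1
    have h2 : (0:ℝ) < q - p := sub_pos.2 hpq
    calc |f q - f p| * (q - p)⁻¹ ≤ (L * (q - p)) * (q - p)⁻¹ := by
          apply mul_le_mul_of_nonneg_right h1 (by positivity)
      _ = L := by field_simp
  have hslope_le : ∀ p ∈ I, ∀ q ∈ I, p < q → slope f p q ≤ L :=
    fun p hp q hq hpq => (le_abs_self _).trans (hslope_abs p hp q hq hpq)
  have hslope_ge : ∀ p ∈ I, ∀ q ∈ I, p < q → -L ≤ slope f p q :=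
    fun p hp q hq hpq => neg_le_of_abs_le (hslope_abs p hp q hq hpq)
  -- neighbours of interior points
  have hnbr : ∀ c ∈ interior I, (∃ w ∈ I, w < c) ∧ (∃ y ∈ I, c < y) := by
    intro c hc
    obtain ⟨ε, hε, hball⟩ := Metric.isOpen_iff.1 isOpen_interior c hc
    constructor
    · refine ⟨c - ε/2, interior_subset (hball ?_), by linarith⟩
      rw [Metric.mem_ball, Real.dist_eq]
      rw [abs_of_nonpos (by linarith)]; linarith
    · refine ⟨c + ε/2, interior_subset (hball ?_), by linarith⟩
      rw [Metric.mem_ball, Real.dist_eq]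
      rw [abs_of_nonneg (by linarith)]; linarith
  -- between points are interior
  have hbetw : ∀ c ∈ interior I, ∀ x ∈ I, ∀ u ∈ Set.Ioo (min c x) (max c x), u ∈ interior I := by
    intro c hc x hx u hu
    rcases le_total c x with h | h
    · obtain ⟨⟨w, hwI, hwc⟩, _⟩ := hnbr c hc
      have hsub : Set.Ioo w x ⊆ I := Set.Ioo_subset_Icc_self.trans (hI.out hwI hx)
      have : u ∈ Set.Ioo w x := by
        rw [min_eq_left h, max_eq_right h] at hu
        exact ⟨hwc.trans hu.1, hu.2⟩
      exact interior_maximal hsub isOpen_Ioo this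
    · obtain ⟨_, ⟨y, hyI, hcy⟩⟩ := hnbr c hc
      have hsub : Set.Ioo x y ⊆ I := Set.Ioo_subset_Icc_self.trans (hI.out hx hyI)
      have : u ∈ Set.Ioo x y := by
        rw [min_eq_right h, max_eq_left h] at hu
        exact ⟨hu.1, hu.2.trans hcy⟩
      exact interior_maximal hsub isOpen_Ioo this
  -- the right-derivative candidate
  set g : ℝ → ℝ := fun c => sInf (slope f c '' (I ∩ Set.Ioi c)) with hgdef
  have hbddb : ∀ c ∈ I, BddBelow (slope f c '' (I ∩ Set.Ioi c)) := by
    rintro c hc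
    refine ⟨-L, ?_⟩
    rintro _ ⟨y, ⟨hyI, hyc⟩, rfl⟩
    exact hslope_ge c hc y hyI hyc
  have hne' : ∀ c ∈ interior I, (slope f c '' (I ∩ Set.Ioi c)).Nonempty := by
    intro c hc
    obtain ⟨_, ⟨y, hyI, hcy⟩⟩ := hnbr c hc
    exact ⟨slope f c y, ⟨y, ⟨hyI, hcy⟩, rfl⟩⟩
  have hg_le_slope : ∀ c ∈ I, ∀ y ∈ I, c < y → g c ≤ slope f c y := by
    intro c hc y hy hcy
    exact csInf_le (hbddb c hc) ⟨y, ⟨hy, hcy⟩, rfl⟩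
  have hslope_le_g : ∀ w ∈ I, ∀ c ∈ interior I, w < c → slope f w c ≤ g c := by
    intro w hw c hc hwc
    refine le_csInf (hne' c hc) ?_
    rintro _ ⟨y, ⟨hyI, hyc⟩, rfl⟩
    simpa [slope_def_field] using hconv.slope_mono_adjacent hw hyI hwc hyc
  have hgL : ∀ c ∈ interior I, g c ≤ L := by
    intro c hc
    obtain ⟨_, ⟨y, hyI, hcy⟩⟩ := hnbr c hc
    exact (hg_le_slope c (interior_subset hc) y hyI hcy).trans
      (hslope_le c (interior_subset hc) y hyI hcy)
  have hgnL : ∀ c ∈ interior I, -L ≤ g c := by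
    intro c hc
    obtain ⟨⟨w, hwI, hwc⟩, _⟩ := hnbr c hc
    exact (hslope_ge w hwI c (interior_subset hc) hwc).trans
      (hslope_le_g w hwI c hc hwc)
  have hg_mono : ∀ c ∈ interior I, ∀ d ∈ interior I, c ≤ d → g c ≤ g d := by
    intro c hc d hd hcd
    rcases eq_or_lt_of_le hcd with rfl | hcd
    · exact le_rfl
    · exact (hg_le_slope c (interior_subset hc) d (interior_subset hd) hcd).trans
        (hslope_le_g c (interior_subset hc) d hd hcd)
  -- continuity of f on I
  have hlipOn : LipschitzOnWith (Real.toNNReal L) f I := by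
    apply LipschitzOnWith.of_dist_le'
    intro x hx y hy
    rw [Real.dist_eq, Real.dist_eq]
    exact hlip x hx y hy
  have hcont : ContinuousOn f I := hlipOn.continuousOn
  -- right derivative
  have hderiv : ∀ c ∈ interior I, HasDerivWithinAt f (g c) (Set.Ioi c) c := by
    intro c hc
    have hcI : c ∈ I := interior_subset hc
    rw [hasDerivWithinAt_iff_tendsto_slope' (fun h => lt_irrefl c (Set.mem_Ioi.1 h))]
    obtain ⟨_, ⟨y0, hy0I, hcy0⟩⟩ := hnbr c hc
    have hIoo_sub : Set.Ioo c y0 ⊆ I := Set.Ioo_subset_Icc_self.trans (hI.out hcI hy0I)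
    have hmono : MonotoneOn (slope f c) (Set.Ioo c y0) := by
      intro p hp q hq hpq
      simpa [slope_def_field] using
        hconv.secant_mono hcI (hIoo_sub hp) (hIoo_sub hq) hp.1.ne' hq.1.ne' hpq
    have hbdd : BddBelow (slope f c '' Set.Ioo c y0) := by
      refine ⟨-L, ?_⟩
      rintro _ ⟨p, hp, rfl⟩
      exact hslope_ge c hcI p (hIoo_sub hp) hp.1
    have hnonempty : (Set.Ioo c y0).Nonempty := Set.nonempty_Ioo.2 hcy0
    have htend := MonotoneOn.tendsto_nhdsWithin_Ioo_right hnonempty hmono hbdd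
    have heq : sInf (slope f c '' Set.Ioo c y0) = g c := by
      apply le_antisymm
      · refine le_csInf (hne' c hc) ?_
        rintro _ ⟨y, ⟨hyI, hcy⟩, rfl⟩
        set p := (c + min y0 y) / 2 with hp
        have hcp : c < p := by
          have : c < min y0 y := lt_min hcy0 hcy
          rw [hp]; linarith [min_le_left y0 y, min_le_right y0 y]
        have hpy0 : p < y0 := by
          have h1 : c < min y0 y := lt_min hcy0 hcy
          have := min_le_left y0 y
          rw [hp]; linarith
        have hpy : p ≤ y := by
          have h1 : c < min y0 y := lt_min hcy0 hcy
          have := min_le_right y0 y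
          rw [hp]; linarith
        have hpmem : p ∈ Set.Ioo c y0 := ⟨hcp, hpy0⟩
        calc sInf (slope f c '' Set.Ioo c y0) ≤ slope f c p :=
              csInf_le hbdd ⟨p, hpmem, rfl⟩
          _ ≤ slope f c y := by
              simpa [slope_def_field] using
                hconv.secant_mono hcI (hIoo_sub hpmem) hyI hcp.ne' hcy.ne' hpy
      · refine le_csInf (hnonempty.image _) ?_
        rintro _ ⟨p, hp, rfl⟩
        exact hg_le_slope c hcI p (hIoo_sub hp) hp.1
    rwa [heq] at htend
  -- the global monotone extension G
  set G : ℝ → ℝ := fun u => sSup (insert (-L) (g '' (interior I ∩ Set.Iic u))) with hGdef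
  have hGne : ∀ u : ℝ, (insert (-L) (g '' (interior I ∩ Set.Iic u))).Nonempty :=
    fun u => ⟨-L, Set.mem_insert _ _⟩
  have hGbdd : ∀ u : ℝ, BddAbove (insert (-L) (g '' (interior I ∩ Set.Iic u))) := by
    intro u
    refine ⟨L, ?_⟩
    rintro v (rfl | ⟨t, ⟨ht, _⟩, rfl⟩)
    · linarith
    · exact hgL t ht
  have hG_mono : Monotone G := by
    intro u v huv
    refine csSup_le_csSup (hGbdd v) (hGne u) ?_
    apply Set.insert_subset_insert
    apply Set.image_mono
    exact Set.inter_subset_inter_right _ (Set.Iic_subset_Iic.2 huv)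
  have hG_eq : ∀ c ∈ interior I, G c = g c := by
    intro c hc
    apply le_antisymm
    · refine csSup_le (hGne c) ?_
      rintro v (rfl | ⟨t, ⟨ht, htc⟩, rfl⟩)
      · exact hgnL c hc
      · exact hg_mono t ht c hc htc
    · exact le_csSup (hGbdd c) (Set.mem_insert_of_mem _ ⟨c, ⟨hc, Set.mem_Iic.2 le_rfl⟩, rfl⟩)
  have hG_le : ∀ u : ℝ, G u ≤ L := by
    intro u
    refine csSup_le (hGne u) ?_
    rintro v (rfl | ⟨t, ⟨ht, _⟩, rfl⟩)
    · linarith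
    · exact hgL t ht
  have hG_ge : ∀ u : ℝ, -L ≤ G u := fun u => le_csSup (hGbdd u) (Set.mem_insert _ _)
  -- right-continuity of G at interior points
  have hrl : ∀ c ∈ interior I, Function.rightLim G c = G c := by
    intro c hc
    have hcI : c ∈ I := interior_subset hc
    apply le_antisymm
    · refine le_of_forall_pos_le_add ?_
      intro ε hε
      -- find y with slope f c y < g c + ε/2
      have hlt : g c < g c + ε / 2 := by linarith
      obtain ⟨_, ⟨y, ⟨hyI, hcy⟩, rfl⟩, hsy⟩ :=
        exists_lt_of_csInf_lt (hne' c hc) (show sInf _ < g c + ε/2 from hlt)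
      -- slope f d y → slope f c y as d → c⁺
      have hfc : ContinuousAt f c :=
        hcont.continuousAt (mem_interior_iff_mem_nhds.1 hc)
      have htnd : Tendsto (fun d => slope f d y) (nhdsWithin c (Set.Ioi c))
          (nhds (slope f c y)) := by
        have h1 : Tendsto (fun d => (f y - f d) / (y - d)) (nhds c)
            (nhds ((f y - f c) / (y - c))) := by
          apply Tendsto.div
          · exact tendsto_const_nhds.sub hfc
          · exact tendsto_const_nhds.sub tendsto_id
          · exact sub_ne_zero.2 hcy.ne'
        have h2 : Tendsto (fun d => (f y - f d) / (y - d)) (nhdsWithin c (Set.Ioi c))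
            (nhds ((f y - f c) / (y - c))) := h1.mono_left nhdsWithin_le_nhds
        have h3 : ∀ d : ℝ, slope f d y = (f y - f d) / (y - d) := by
          intro d; rw [slope_def_field]
        simp_rw [h3]
        rw [show slope f c y = (f y - f c) / (y - c) from by rw [slope_def_field]] at *
        exact h2
      have hev1 : ∀ᶠ d in nhdsWithin c (Set.Ioi c), slope f d y < slope f c y + ε/2 :=
        htnd.eventually_lt_const (by linarith)
      have hev2 : ∀ᶠ d in nhdsWithin c (Set.Ioi c), d ∈ Set.Ioo c y :=
        Filter.eventually_of_mem (Ioo_mem_nhdsGT_of_mem ⟨le_rfl, hcy⟩) (fun d hd => hd)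
      have hev3 : ∀ᶠ d in nhdsWithin c (Set.Ioi c), d ∈ interior I :=
        Filter.eventually_of_mem
          (nhdsWithin_le_nhds (isOpen_interior.mem_nhds hc)) (fun d hd => hd)
      obtain ⟨d, hd1, hd2, hd3⟩ := (hev1.and (hev2.and hev3)).exists
      have hdy : d < y := hd2.2
      have hdI : d ∈ I := interior_subset hd3
      calc Function.rightLim G c ≤ G d := hG_mono.rightLim_le hd2.1
        _ = g d := hG_eq d hd3
        _ ≤ slope f d y := hg_le_slope d hdI y hyI hdy
        _ ≤ slope f c y + ε/2 := hd1.le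
        _ ≤ g c + ε := by linarith
        _ = G c + ε := by rw [hG_eq c hc]
    · exact hG_mono.le_rightLim le_rfl
  -- the Stieltjes measure
  set S := hG_mono.stieltjesFunction with hSdef
  have hSval : ∀ c ∈ interior I, S c = G c := by
    intro c hc
    rw [hG_mono.stieltjesFunction_eq, hrl c hc]
  -- finiteness
  have hbdda : BddAbove (Set.range G) := ⟨L, by rintro _ ⟨u, rfl⟩; exact hG_le u⟩
  have hbddb' : BddBelow (Set.range G) := ⟨-L, by rintro _ ⟨u, rfl⟩; exact hG_ge u⟩
  have htop : Tendsto G atTop (nhds (⨆ u, G u)) := tendsto_atTop_ciSup hG_mono hbdda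
  have hbot : Tendsto G atBot (nhds (⨅ u, G u)) := tendsto_atBot_ciInf hG_mono hbddb'
  have hStop : Tendsto S atTop (nhds (⨆ u, G u)) := by
    have h1 : ∀ u : ℝ, G u ≤ S u := fun u => hG_mono.le_rightLim le_rfl
    have h2 : ∀ u : ℝ, S u ≤ G (u + 1) := fun u => hG_mono.rightLim_le (by linarith)
    have h3 : Tendsto (fun u : ℝ => G (u + 1)) atTop (nhds (⨆ u, G u)) :=
      htop.comp (tendsto_atTop_add_const_right _ 1 tendsto_id)
    exact tendsto_of_tendsto_of_tendsto_of_le_of_le htop h3 h1 h2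
  have hSbot : Tendsto S atBot (nhds (⨅ u, G u)) := by
    have h1 : ∀ u : ℝ, G u ≤ S u := fun u => hG_mono.le_rightLim le_rfl
    have h2 : ∀ u : ℝ, S u ≤ G (u + 1) := fun u => hG_mono.rightLim_le (by linarith)
    have h3 : Tendsto (fun u : ℝ => G (u + 1)) atBot (nhds (⨅ u, G u)) :=
      hbot.comp (tendsto_atBot_add_const_right _ 1 tendsto_id)
    exact tendsto_of_tendsto_of_tendsto_of_le_of_le hbot h3 h1 h2
  haveI hfin : IsFiniteMeasure S.measure := S.isFiniteMeasure hSbot hStop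
  -- measure of Ioc between interior points
  have hmeasIoc : ∀ c ∈ interior I, ∀ d ∈ interior I, c ≤ d →
      S.measure (Set.Ioc c d) = ENNReal.ofReal (G d - G c) := by
    intro c hc d hd hcd
    rw [S.measure_Ioc, hSval c hc, hSval d hd]
  have hImeas : MeasurableSet I := hI.measurableSet
  refine ⟨S.measure.restrict I, inferInstance,
    by rw [Measure.restrict_apply (hImeas.compl), Set.compl_inter_self, measure_empty], ?_⟩
  intro c hc x hx
  have hcI : c ∈ I := interior_subset hc
  have hdW : derivWithin f (Set.Ici c) c = g c := by
    rw [← derivWithin_Ioi_eq_Ici]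
    exact (hderiv c hc).derivWithin (uniqueDiffWithinAt_Ioi c)
  have hofmax : ∀ a : ℝ, ENNReal.ofReal (max a 0) = ENNReal.ofReal a := by
    intro a
    rcases le_total a 0 with h | h
    · rw [max_eq_right h, ENNReal.ofReal_zero, eq_comm, ENNReal.ofReal_eq_zero]
      exact h
    · rw [max_eq_left h]
  rcases lt_trichotomy x c with hxc | rfl | hcx
  · -- case x < c
    have hIccsub : Set.Icc x c ⊆ I := hI.out hx hcI
    have hIoosub : ∀ u ∈ Set.Ioo x c, u ∈ interior I := by
      intro u hu
      refine hbetw c hc x hx u ?_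
      rw [min_eq_right hxc.le, max_eq_left hxc.le]
      exact hu
    have hFTC : ∫ u in x..c, G u = f c - f x := by
      apply intervalIntegral.integral_eq_sub_of_hasDeriv_right_of_le hxc.le
      · exact hcont.mono hIccsub
      · intro u hu
        have hu' := hIoosub u hu
        rw [hG_eq u hu']
        exact hderiv u hu'
      · exact (hG_mono.monotoneOn _).intervalIntegrable
    have hIntG : IntegrableOn G (Set.Ioo x c) volume := by
      have := (hG_mono.monotoneOn (Set.Icc x c)).integrableOn_isCompact (μ := volume) isCompact_Icc
      exact this.mono_set Set.Ioo_subset_Icc_self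
    have hIntc : IntegrableOn (fun _ : ℝ => G c) (Set.Ioo x c) volume :=
      integrableOn_const (by rw [Real.volume_Ioo]; exact ENNReal.ofReal_ne_top)
    have hvol : (volume (Set.Ioo x c)).toReal = c - x := by
      rw [Real.volume_Ioo, ENNReal.toReal_ofReal (by linarith)]
    have step1 : ∫ u in x..c, G u = (c - x) * G c - ∫ u in Set.Ioo x c, (G c - G u) := by
      rw [intervalIntegral.integral_of_le hxc.le, MeasureTheory.integral_Ioc_eq_integral_Ioo,
        MeasureTheory.integral_sub hIntc hIntG, MeasureTheory.setIntegral_const, measureReal_def, hvol,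
        smul_eq_mul]
      ring
    have step2 : ∫ u in Set.Ioo x c, (G c - G u) =
        (∫⁻ u in Set.Ioo x c, ENNReal.ofReal (G c - G u)).toReal := by
      rw [MeasureTheory.integral_eq_lintegral_of_nonneg_ae]
      · exact ae_restrict_of_forall_mem measurableSet_Ioo
          fun u hu => sub_nonneg.2 (hG_mono hu.2.le)
      · exact (measurable_const.sub hG_mono.measurable).aestronglyMeasurable
    have step3 : ∫⁻ u in Set.Ioo x c, ENNReal.ofReal (G c - G u)
        = ∫⁻ u in Set.Ioo x c, S.measure (Set.Ioc u c) := by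
      apply setLIntegral_congr_fun measurableSet_Ioo
      intro u hu
      exact (hmeasIoc u (hIoosub u hu) c hc hu.2.le).symm
    have step4 := ton2 S.measure c x
    have hT2 : ∫ u in {u ∈ I | c < u}, max (x - u) 0 ∂(S.measure.restrict I) = 0 := by
      apply MeasureTheory.setIntegral_eq_zero_of_forall_eq_zero
      intro u hu
      have : c < u := hu.2
      rw [max_eq_right (by linarith)]
    have hT1 : ∫ u in {u ∈ I | u ≤ c}, max (u - x) 0 ∂(S.measure.restrict I)
        = (∫⁻ u in Set.Iic c, ENNReal.ofReal (u - x) ∂S.measure).toReal := by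
      have hAeq : {u : ℝ | u ∈ I ∧ u ≤ c} = I ∩ Set.Iic c := by
        ext u; simp [Set.mem_Iic]
      have hinter : (I ∩ Set.Iic c) ∩ I = I ∩ Set.Iic c := by
        ext u; exact ⟨fun h => h.1, fun h => ⟨h, h.1⟩⟩
      rw [show {u ∈ I | u ≤ c} = I ∩ Set.Iic c from hAeq,
        Measure.restrict_restrict (hImeas.inter measurableSet_Iic), hinter]
      have hnn : 0 ≤ᵐ[S.measure.restrict (I ∩ Set.Iic c)] fun u => max (u - x) 0 :=
        ae_of_all _ fun u => le_max_right _ _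
      have hmeas : AEStronglyMeasurable (fun u : ℝ => max (u - x) 0)
          (S.measure.restrict (I ∩ Set.Iic c)) :=
        ((continuous_id.sub continuous_const).max continuous_const).aestronglyMeasurable
      rw [MeasureTheory.integral_eq_lintegral_of_nonneg_ae hnn hmeas]
      congr 1
      rw [← lintegral_indicator (hImeas.inter measurableSet_Iic),
        ← lintegral_indicator measurableSet_Iic]
      refine lintegral_congr fun u => ?_
      by_cases hu : u ∈ I ∩ Set.Iic c
      · rw [Set.indicator_of_mem hu, Set.indicator_of_mem hu.2, hofmax]
      · rw [Set.indicator_of_notMem hu]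
        by_cases hu2 : u ∈ Set.Iic c
        · rw [Set.indicator_of_mem hu2]
          have huI : u ∉ I := fun h => hu ⟨h, hu2⟩
          have hxu : u < x := by
            by_contra hle
            push_neg at hle
            exact huI (hIccsub ⟨hle, hu2⟩)
          exact (ENNReal.ofReal_eq_zero.2 (by linarith)).symm
        · rw [Set.indicator_of_notMem hu2]
    have hkey : f c - f x = (c - x) * G c
        - (∫⁻ t in Set.Iic c, ENNReal.ofReal (t - x) ∂S.measure).toReal := by
      calc f c - f x = ∫ u in x..c, G u := hFTC.symm
        _ = (c - x) * G c - ∫ u in Set.Ioo x c, (G c - G u) := step1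
        _ = (c - x) * G c
            - (∫⁻ t in Set.Iic c, ENNReal.ofReal (t - x) ∂S.measure).toReal := by
          rw [step2, step3, step4]
    rw [hdW, ← hG_eq c hc, hT1, hT2]
    linarith
  · -- case x = c
    rw [hdW]
    have hT1 : ∫ u in {u ∈ I | u ≤ x}, max (u - x) 0 ∂(S.measure.restrict I) = 0 := by
      apply MeasureTheory.setIntegral_eq_zero_of_forall_eq_zero
      intro u hu
      have : u ≤ x := hu.2
      rw [max_eq_right (by linarith)]
    have hT2 : ∫ u in {u ∈ I | x < u}, max (x - u) 0 ∂(S.measure.restrict I) = 0 := by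
      apply MeasureTheory.setIntegral_eq_zero_of_forall_eq_zero
      intro u hu
      have : x < u := hu.2
      rw [max_eq_right (by linarith)]
    rw [hT1, hT2]
    ring
  · -- case c < x
    have hIccsub : Set.Icc c x ⊆ I := hI.out hcI hx
    have hIoosub : ∀ u ∈ Set.Ioo c x, u ∈ interior I := by
      intro u hu
      refine hbetw c hc x hx u ?_
      rw [min_eq_left hcx.le, max_eq_right hcx.le]
      exact hu
    have hFTC : ∫ u in c..x, G u = f x - f c := by
      apply intervalIntegral.integral_eq_sub_of_hasDeriv_right_of_le hcx.le
      · exact hcont.mono hIccsub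
      · intro u hu
        have hu' := hIoosub u hu
        rw [hG_eq u hu']
        exact hderiv u hu'
      · exact (hG_mono.monotoneOn _).intervalIntegrable
    have hIntG : IntegrableOn G (Set.Ioo c x) volume := by
      have := (hG_mono.monotoneOn (Set.Icc c x)).integrableOn_isCompact (μ := volume) isCompact_Icc
      exact this.mono_set Set.Ioo_subset_Icc_self
    have hIntc : IntegrableOn (fun _ : ℝ => G c) (Set.Ioo c x) volume :=
      integrableOn_const (by rw [Real.volume_Ioo]; exact ENNReal.ofReal_ne_top)
    have hvol : (volume (Set.Ioo c x)).toReal = x - c := by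
      rw [Real.volume_Ioo, ENNReal.toReal_ofReal (by linarith)]
    have hsplit : ∫ u in Set.Ioo c x, (G u - G c)
        = (∫ u in Set.Ioo c x, G u) - (x - c) * G c := by
      rw [MeasureTheory.integral_sub hIntG hIntc, MeasureTheory.setIntegral_const, measureReal_def, hvol,
        smul_eq_mul]
    have step1 : ∫ u in c..x, G u = (x - c) * G c + ∫ u in Set.Ioo c x, (G u - G c) := by
      rw [intervalIntegral.integral_of_le hcx.le, MeasureTheory.integral_Ioc_eq_integral_Ioo,
        hsplit]
      ring
    have step2 : ∫ u in Set.Ioo c x, (G u - G c) =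
        (∫⁻ u in Set.Ioo c x, ENNReal.ofReal (G u - G c)).toReal := by
      rw [MeasureTheory.integral_eq_lintegral_of_nonneg_ae]
      · exact ae_restrict_of_forall_mem measurableSet_Ioo
          fun u hu => sub_nonneg.2 (hG_mono hu.1.le)
      · exact (hG_mono.measurable.sub measurable_const).aestronglyMeasurable
    have step3 : ∫⁻ u in Set.Ioo c x, ENNReal.ofReal (G u - G c)
        = ∫⁻ u in Set.Ioo c x, S.measure (Set.Ioc c u) := by
      apply setLIntegral_congr_fun measurableSet_Ioo
      intro u hu
      exact (hmeasIoc c hc u (hIoosub u hu) hu.1.le).symm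
    have step4 := ton1 S.measure c x
    have hT1 : ∫ u in {u ∈ I | u ≤ c}, max (u - x) 0 ∂(S.measure.restrict I) = 0 := by
      apply MeasureTheory.setIntegral_eq_zero_of_forall_eq_zero
      intro u hu
      have : u ≤ c := hu.2
      rw [max_eq_right (by linarith)]
    have hT2 : ∫ u in {u ∈ I | c < u}, max (x - u) 0 ∂(S.measure.restrict I)
        = (∫⁻ u in Set.Ioi c, ENNReal.ofReal (x - u) ∂S.measure).toReal := by
      have hAeq : {u : ℝ | u ∈ I ∧ c < u} = I ∩ Set.Ioi c := by
        ext u; simp [Set.mem_Ioi]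
      have hinter : (I ∩ Set.Ioi c) ∩ I = I ∩ Set.Ioi c := by
        ext u; exact ⟨fun h => h.1, fun h => ⟨h, h.1⟩⟩
      rw [show {u ∈ I | c < u} = I ∩ Set.Ioi c from hAeq,
        Measure.restrict_restrict (hImeas.inter measurableSet_Ioi), hinter]
      have hnn : 0 ≤ᵐ[S.measure.restrict (I ∩ Set.Ioi c)] fun u => max (x - u) 0 :=
        ae_of_all _ fun u => le_max_right _ _
      have hmeas : AEStronglyMeasurable (fun u : ℝ => max (x - u) 0)
          (S.measure.restrict (I ∩ Set.Ioi c)) :=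
        ((continuous_const.sub continuous_id).max continuous_const).aestronglyMeasurable
      rw [MeasureTheory.integral_eq_lintegral_of_nonneg_ae hnn hmeas]
      congr 1
      rw [← lintegral_indicator (hImeas.inter measurableSet_Ioi),
        ← lintegral_indicator measurableSet_Ioi]
      refine lintegral_congr fun u => ?_
      by_cases hu : u ∈ I ∩ Set.Ioi c
      · rw [Set.indicator_of_mem hu, Set.indicator_of_mem hu.2, hofmax]
      · rw [Set.indicator_of_notMem hu]
        by_cases hu2 : u ∈ Set.Ioi c
        · rw [Set.indicator_of_mem hu2]
          have huI : u ∉ I := fun h => hu ⟨h, hu2⟩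
          have hxu : x < u := by
            by_contra hle
            push_neg at hle
            exact huI (hIccsub ⟨(Set.mem_Ioi.1 hu2).le, hle⟩)
          exact (ENNReal.ofReal_eq_zero.2 (by linarith)).symm
        · rw [Set.indicator_of_notMem hu2]
    have hkey : f x - f c = (x - c) * G c
        + (∫⁻ t in Set.Ioi c, ENNReal.ofReal (x - t) ∂S.measure).toReal := by
      calc f x - f c = ∫ u in c..x, G u := hFTC.symm
        _ = (x - c) * G c + ∫ u in Set.Ioo c x, (G u - G c) := step1
        _ = (x - c) * G c
            + (∫⁻ t in Set.Ioi c, ENNReal.ofReal (x - t) ∂S.measure).toReal := by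
          rw [step2, step3, step4]
    rw [hdW, ← hG_eq c hc, hT1, hT2]
    linarith
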